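/- Let S be a finite semigroup with a zero element 0 (an element with 0·x = x·0 = 0 for all x ∈ S) which is 0-simple: every ideal I of S other than ∅ and S itself equals {0}. Let s ∈ S with s ≠ 0 and set F = sSs = {s·a·s : a ∈ S}. Then either x·y = 0 for all x,y ∈ F (F is a zero subsemigroup), or F∖{0} is a group under the multiplication of S: it is closed under multiplication, contains an element e with e·x = x·e = x for all x ∈ F∖{0}, and every x ∈ F∖{0} has y ∈ F∖{0} with x·y = y·x = e. -/
import Mathlib

namespace Stmt15Aux

variable {S : Type*}

def pw (mul : S → S → S) (t : S) : ℕ → S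
  | 0 => t
  | k+1 => mul (pw mul t k) t

theorem pw_succ_left (mul : S → S → S)
    (hassoc : ∀ x y z : S, mul (mul x y) z = mul x (mul y z)) (t : S) :
    ∀ k, pw mul t (k+1) = mul t (pw mul t k)
  | 0 => rfl
  | (k+1) => by
    show mul (pw mul t (k+1)) t = mul t (mul (pw mul t k) t)
    rw [pw_succ_left mul hassoc t k, hassoc]

theorem pw_add (mul : S → S → S)
    (hassoc : ∀ x y z : S, mul (mul x y) z = mul x (mul y z)) (t : S) :
    ∀ j k, mul (pw mul t j) (pw mul t k) = pw mul t (j + k + 1)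
  | j, 0 => rfl
  | j, (k+1) => by
    show mul (pw mul t j) (mul (pw mul t k) t) = pw mul t (j + (k+1) + 1)
    have h1 : j + (k+1) + 1 = (j + k + 1) + 1 := by omega
    rw [h1]
    show mul (pw mul t j) (mul (pw mul t k) t) = mul (pw mul t (j + k + 1)) t
    rw [← hassoc, pw_add mul hassoc t j k]

theorem exists_idem [Fintype S] (mul : S → S → S)
    (hassoc : ∀ x y z : S, mul (mul x y) z = mul x (mul y z)) (t : S) :
    ∃ k, mul (pw mul t k) (pw mul t k) = pw mul t k := by
  have key : ∀ i j : ℕ, i < j → pw mul t i = pw mul t j →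
      ∃ k, mul (pw mul t k) (pw mul t k) = pw mul t k := by
    intro i j hij heq
    set p := j - i with hp
    have hp1 : 1 ≤ p := by omega
    have hstep : ∀ k, i ≤ k → pw mul t (k + p) = pw mul t k := by
      intro k hk
      induction k, hk using Nat.le_induction with
      | base =>
        have h : i + p = j := by omega
        rw [h, heq]
      | succ k hk ih =>
        have h : k + 1 + p = (k + p) + 1 := by omega
        rw [h]
        show mul (pw mul t (k + p)) t = pw mul t (k+1)
        rw [ih]
        rfl
    have hmulti : ∀ c k, i ≤ k → pw mul t (k + c * p) = pw mul t k := by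
      intro c
      induction c with
      | zero => intro k _; simp
      | succ c ih =>
        intro k hk
        have h : k + (c+1) * p = (k + c * p) + p := by ring
        rw [h, hstep (k + c * p) (by omega), ih k hk]
    obtain ⟨K, hK1, hK2⟩ : ∃ K, i ≤ K ∧ K + 1 = (i+1) * p := by
      have h : i + 1 ≤ (i+1) * p := by
        calc i + 1 = (i+1) * 1 := (Nat.mul_one _).symm
          _ ≤ (i+1) * p := Nat.mul_le_mul_left _ hp1
      exact ⟨(i+1) * p - 1, by omega, by omega⟩
    refine ⟨K, ?_⟩
    rw [pw_add mul hassoc t K K]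
    have h : K + K + 1 = K + (i+1) * p := by omega
    rw [h, hmulti (i+1) K hK1]
  obtain ⟨i, j, hne, heq⟩ := Finite.exists_ne_map_eq_of_infinite (pw mul t)
  rcases hne.lt_or_gt with h | h
  · exact key i j h heq
  · exact key j i h heq.symm

theorem iter (mul : S → S → S)
    (hassoc : ∀ x y z : S, mul (mul x y) z = mul x (mul y z)) (s U v : S)
    (h : s = mul (mul U s) v) :
    ∀ k, s = mul (mul (pw mul U k) s) (pw mul v k)
  | 0 => h
  | (k+1) => by
    have ih := iter mul hassoc s U v h k
    calc s = mul (mul U s) v := h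
      _ = mul (mul U (mul (mul (pw mul U k) s) (pw mul v k))) v := by rw [← ih]
      _ = mul (mul (pw mul U (k+1)) s) (pw mul v (k+1)) := by
          rw [pw_succ_left mul hassoc U k]
          show mul (mul U (mul (mul (pw mul U k) s) (pw mul v k))) v
             = mul (mul (mul U (pw mul U k)) s) (mul (pw mul v k) v)
          simp only [hassoc]

theorem iterL [Fintype S] (mul : S → S → S)
    (hassoc : ∀ x y z : S, mul (mul x y) z = mul x (mul y z)) (s U v : S)
    (h : s = mul (mul U s) v) :
    ∃ k, mul (pw mul U k) s = s := by
  obtain ⟨k, hk⟩ := exists_idem mul hassoc U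
  have h1 := iter mul hassoc s U v h k
  refine ⟨k, ?_⟩
  conv_lhs => rw [h1]
  rw [← hassoc (pw mul U k) (mul (pw mul U k) s) (pw mul v k),
      ← hassoc (pw mul U k) (pw mul U k) s, hk, ← h1]

theorem iterR [Fintype S] (mul : S → S → S)
    (hassoc : ∀ x y z : S, mul (mul x y) z = mul x (mul y z)) (s U v : S)
    (h : s = mul (mul U s) v) :
    ∃ k, mul s (pw mul v k) = s := by
  obtain ⟨k, hk⟩ := exists_idem mul hassoc v
  have h1 := iter mul hassoc s U v h k
  refine ⟨k, ?_⟩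
  conv_lhs => rw [h1]
  rw [hassoc (mul (pw mul U k) s) (pw mul v k) (pw mul v k), hk, ← h1]

theorem Lgen [Fintype S] (mul : S → S → S)
    (hassoc : ∀ x y z : S, mul (mul x y) z = mul x (mul y z)) (s t u v : S)
    (h : s = mul (mul u (mul t s)) v) :
    ∃ w, s = mul w (mul t s) := by
  have h' : s = mul (mul (mul u t) s) v := by
    rw [hassoc u t s]; exact h
  obtain ⟨k, hk⟩ := iterL mul hassoc s (mul u t) v h'
  cases k with
  | zero =>
    refine ⟨u, ?_⟩
    rw [← hassoc u t s]
    exact hk.symm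
  | succ k =>
    refine ⟨mul (pw mul (mul u t) k) u, ?_⟩
    calc s = mul (pw mul (mul u t) (k+1)) s := hk.symm
      _ = mul (mul (pw mul (mul u t) k) (mul u t)) s := rfl
      _ = mul (mul (pw mul (mul u t) k) u) (mul t s) := by simp only [hassoc]

theorem Rgen [Fintype S] (mul : S → S → S)
    (hassoc : ∀ x y z : S, mul (mul x y) z = mul x (mul y z)) (s t u v : S)
    (h : s = mul (mul u (mul s t)) v) :
    ∃ r, s = mul (mul s t) r := by
  have h' : s = mul (mul u s) (mul t v) := by
    calc s = mul (mul u (mul s t)) v := h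
      _ = mul (mul u s) (mul t v) := by simp only [hassoc]
  obtain ⟨k, hk⟩ := iterR mul hassoc s u (mul t v) h'
  cases k with
  | zero =>
    refine ⟨v, ?_⟩
    calc s = mul s (mul t v) := hk.symm
      _ = mul (mul s t) v := (hassoc s t v).symm
  | succ k =>
    refine ⟨mul v (pw mul (mul t v) k), ?_⟩
    calc s = mul s (pw mul (mul t v) (k+1)) := hk.symm
      _ = mul s (mul (mul t v) (pw mul (mul t v) k)) := by
          rw [pw_succ_left mul hassoc]
      _ = mul (mul s t) (mul v (pw mul (mul t v) k)) := by simp only [hassoc]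

end Stmt15Aux

/-- In a finite `0`-simple semigroup `S` with zero, for `0 ≠ s ∈ S` the set
`F = sSs` is either a zero subsemigroup or `F \ {0}` is a group. -/
theorem stmt_15 {S : Type*} [Fintype S] (mul : S → S → S)
    (hassoc : ∀ x y z : S, mul (mul x y) z = mul x (mul y z))
    (z : S) (hz : ∀ x : S, mul z x = z ∧ mul x z = z)
    (hsimple : ∀ I : Set S, (∀ i ∈ I, ∀ t : S, mul t i ∈ I ∧ mul i t ∈ I) →
      I = ∅ ∨ I = Set.univ ∨ I = {z})
    (s : S) (hs : s ≠ z) :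
    (∀ x y : S, (∃ a, x = mul (mul s a) s) → (∃ b, y = mul (mul s b) s) →
      mul x y = z) ∨
    ((∀ x y : S, (∃ a, x = mul (mul s a) s) → x ≠ z →
        (∃ b, y = mul (mul s b) s) → y ≠ z →
        ((∃ c, mul x y = mul (mul s c) s) ∧ mul x y ≠ z)) ∧
     ∃ e : S, (∃ a, e = mul (mul s a) s) ∧ e ≠ z ∧
       (∀ x : S, (∃ a, x = mul (mul s a) s) → x ≠ z →
         mul e x = x ∧ mul x e = x) ∧
       (∀ x : S, (∃ a, x = mul (mul s a) s) → x ≠ z →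
         ∃ y : S, (∃ b, y = mul (mul s b) s) ∧ y ≠ z ∧
           mul x y = e ∧ mul y x = e)) := by
  classical
  by_cases hnull : ∀ x y : S, (∃ a, x = mul (mul s a) s) → (∃ b, y = mul (mul s b) s) →
      mul x y = z
  · exact Or.inl hnull
  right
  push_neg at hnull
  obtain ⟨x₀, y₀, hx₀, hy₀, h0⟩ := hnull
  obtain ⟨a₀, rfl⟩ := hx₀
  obtain ⟨b₀, rfl⟩ := hy₀
  have hz1 : ∀ x : S, mul z x = z := fun x => (hz x).1
  have hz2 : ∀ x : S, mul x z = z := fun x => (hz x).2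
  -- S² = S
  have hS2 : ∀ r : S, ∃ x y : S, r = mul x y := by
    have hid := hsimple {w | ∃ x y : S, w = mul x y} ?_
    · rcases hid with h | h | h
      · exfalso
        have hm : z ∈ {w | ∃ x y : S, w = mul x y} := ⟨z, z, (hz1 z).symm⟩
        rw [h] at hm
        exact Set.notMem_empty z hm
      · intro r
        exact Set.eq_univ_iff_forall.mp h r
      · exfalso
        have hm : mul (mul (mul s a₀) s) (mul (mul s b₀) s) ∈
            {w | ∃ x y : S, w = mul x y} := ⟨_, _, rfl⟩
        rw [h] at hm
        exact h0 hm
    · rintro i ⟨x, y, rfl⟩ t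
      exact ⟨⟨mul t x, y, (hassoc t x y).symm⟩, ⟨x, mul y t, hassoc x y t⟩⟩
  -- s * s ≠ z
  have hss : mul s s ≠ z := by
    intro h
    apply h0
    have h' : ∀ w : S, mul s (mul s w) = z := by
      intro w; rw [← hassoc, h, hz1]
    calc mul (mul (mul s a₀) s) (mul (mul s b₀) s)
        = mul s (mul a₀ (mul s (mul s (mul b₀ s)))) := by simp only [hassoc]
      _ = z := by rw [h', hz2, hz2]
  -- no "null" nonzero elements
  have hN : ∀ t : S, t ≠ z → ∃ u v : S, mul (mul u t) v ≠ z := by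
    have hid := hsimple {t | ∀ u v : S, mul (mul u t) v = z} ?_
    · intro t ht
      rcases hid with h | h | h
      · have hm : t ∉ ({} : Set S) := Set.notMem_empty t
        rw [← h] at hm
        simp only [Set.mem_setOf_eq] at hm
        push_neg at hm
        exact hm
      · exfalso
        obtain ⟨x, y, hxy⟩ := hS2 s
        obtain ⟨c, d, hcd⟩ := hS2 x
        have hd : ∀ u v : S, mul (mul u d) v = z := Set.eq_univ_iff_forall.mp h d
        apply hs
        rw [hxy, hcd]
        exact hd c y
      · have hm : t ∉ ({z} : Set S) := by simpa using ht
        rw [← h] at hm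
        simp only [Set.mem_setOf_eq] at hm
        push_neg at hm
        exact hm
    · intro i hi t
      constructor
      · intro u v
        rw [← hassoc u t i]
        exact hi (mul u t) v
      · intro u v
        rw [← hassoc u i t, hassoc (mul u i) t v]
        exact hi u (mul t v)
  -- StS = S for all t ≠ z
  have hT : ∀ t : S, t ≠ z → ∀ r : S, ∃ u v : S, r = mul (mul u t) v := by
    intro t ht
    have hid := hsimple {w | ∃ u v : S, w = mul (mul u t) v} ?_
    · rcases hid with h | h | h
      · exfalso
        have hm : z ∈ {w | ∃ u v : S, w = mul (mul u t) v} :=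
          ⟨z, z, by rw [hz1, hz1]⟩
        rw [h] at hm
        exact Set.notMem_empty z hm
      · intro r
        exact Set.eq_univ_iff_forall.mp h r
      · exfalso
        obtain ⟨u, v, huv⟩ := hN t ht
        have hm : mul (mul u t) v ∈ {w | ∃ u v : S, w = mul (mul u t) v} := ⟨u, v, rfl⟩
        rw [h] at hm
        exact huv hm
    · rintro i ⟨u, v, rfl⟩ r
      constructor
      · exact ⟨mul r u, v, by simp only [hassoc]⟩
      · exact ⟨u, mul v r, by simp only [hassoc]⟩
  -- closure of F under multiplication
  have clos : ∀ x y : S, (∃ a, x = mul (mul s a) s) → (∃ b, y = mul (mul s b) s) →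
      ∃ c, mul x y = mul (mul s c) s := by
    rintro x y ⟨a, rfl⟩ ⟨b, rfl⟩
    exact ⟨mul a (mul s (mul s b)), by simp only [hassoc]⟩
  -- no zero divisors lemma
  have hnzd : ∀ c d : S, mul c s ≠ z → mul s d ≠ z → mul (mul c s) (mul s d) ≠ z := by
    intro c d hcs hsd hcon
    obtain ⟨u, v, huv⟩ := hT (mul c s) hcs s
    obtain ⟨w, hw⟩ := Stmt15Aux.Lgen mul hassoc s c u v huv
    obtain ⟨p, q, hpq⟩ := hT (mul s d) hsd s
    obtain ⟨r, hr⟩ := Stmt15Aux.Rgen mul hassoc s d p q hpq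
    apply hss
    calc mul s s = mul (mul w (mul c s)) (mul (mul s d) r) := by rw [← hw, ← hr]
      _ = mul w (mul (mul (mul c s) (mul s d)) r) := by simp only [hassoc]
      _ = z := by rw [hcon, hz1, hz2]
  -- products of nonzero F-elements are nonzero
  have prodG : ∀ x y : S, (∃ a, x = mul (mul s a) s) → x ≠ z →
      (∃ b, y = mul (mul s b) s) → y ≠ z → mul x y ≠ z := by
    rintro x y ⟨a, rfl⟩ hxz ⟨b, rfl⟩ hyz
    have h2 : mul s (mul b s) ≠ z := by rw [← hassoc]; exact hyz
    have h3 := hnzd (mul s a) (mul b s) hxz h2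
    have heq : mul (mul (mul s a) s) (mul s (mul b s))
        = mul (mul (mul s a) s) (mul (mul s b) s) := by rw [hassoc s b s]
    exact fun hcon => h3 (heq.trans hcon)
  -- powers stay in F and nonzero
  have powF : ∀ x : S, (∃ a, x = mul (mul s a) s) → x ≠ z →
      ∀ k, (∃ c, Stmt15Aux.pw mul x k = mul (mul s c) s) ∧ Stmt15Aux.pw mul x k ≠ z := by
    intro x hx hxz k
    induction k with
    | zero => exact ⟨hx, hxz⟩
    | succ k ih =>
      exact ⟨clos _ _ ih.1 hx, prodG _ _ ih.1 ih.2 hx hxz⟩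
  -- any nonzero idempotent of F is a two-sided identity on F
  have key : ∀ f : S, (∃ w, f = mul (mul s w) s) → f ≠ z → mul f f = f →
      ∀ x : S, (∃ b, x = mul (mul s b) s) → mul f x = x ∧ mul x f = x := by
    rintro f ⟨w, hw⟩ hfz hff x ⟨b, rfl⟩
    obtain ⟨u, v, huv⟩ := hT f hfz s
    have huv1 : s = mul (mul u (mul s (mul w s))) v := by
      rw [← hassoc s w s, ← hw]; exact huv
    obtain ⟨r, hr⟩ := Stmt15Aux.Rgen mul hassoc s (mul w s) u v huv1
    have hr' : s = mul f r := by rw [hw, hassoc s w s]; exact hr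
    have hfs : mul f s = s := by
      calc mul f s = mul f (mul f r) := by rw [← hr']
        _ = mul (mul f f) r := (hassoc f f r).symm
        _ = mul f r := by rw [hff]
        _ = s := hr'.symm
    obtain ⟨w', hw'⟩ := Stmt15Aux.Lgen mul hassoc s (mul s w) u v (by rw [← hw]; exact huv)
    have hw'' : s = mul w' f := by rw [hw]; exact hw'
    have hsf : mul s f = s := by
      calc mul s f = mul (mul w' f) f := by rw [← hw'']
        _ = mul w' (mul f f) := hassoc w' f f
        _ = mul w' f := by rw [hff]
        _ = s := hw''.symm
    constructor
    · calc mul f (mul (mul s b) s) = mul (mul f s) (mul b s) := by simp only [hassoc]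
        _ = mul s (mul b s) := by rw [hfs]
        _ = mul (mul s b) s := (hassoc s b s).symm
    · calc mul (mul (mul s b) s) f = mul (mul s b) (mul s f) := hassoc _ _ _
        _ = mul (mul s b) s := by rw [hsf]
  refine ⟨?_, ?_⟩
  · intro x y hx hxz hy hyz
    exact ⟨clos x y hx hy, prodG x y hx hxz hy hyz⟩
  · have hgF : ∃ c, mul (mul (mul s a₀) s) (mul (mul s b₀) s) = mul (mul s c) s :=
      clos _ _ ⟨a₀, rfl⟩ ⟨b₀, rfl⟩
    obtain ⟨k, hk⟩ := Stmt15Aux.exists_idem mul hassoc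
      (mul (mul (mul s a₀) s) (mul (mul s b₀) s))
    obtain ⟨hpF, hpz⟩ := powF (mul (mul (mul s a₀) s) (mul (mul s b₀) s)) hgF h0 k
    refine ⟨Stmt15Aux.pw mul (mul (mul (mul s a₀) s) (mul (mul s b₀) s)) k,
      hpF, hpz, ?_, ?_⟩
    · intro x hx _
      exact key _ hpF hpz hk x hx
    · intro x hx hxz
      obtain ⟨k', hk'⟩ := Stmt15Aux.exists_idem mul hassoc x
      obtain ⟨hqF, hqz⟩ := powF x hx hxz k'
      have hfe : Stmt15Aux.pw mul x k'
          = Stmt15Aux.pw mul (mul (mul (mul s a₀) s) (mul (mul s b₀) s)) k := by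
        have h1 := (key _ hqF hqz hk' _ hpF).1
        have h2 := (key _ hpF hpz hk _ hqF).2
        exact h2.symm.trans h1
      cases k' with
      | zero =>
        have hxe : x = Stmt15Aux.pw mul (mul (mul (mul s a₀) s) (mul (mul s b₀) s)) k := hfe
        refine ⟨Stmt15Aux.pw mul (mul (mul (mul s a₀) s) (mul (mul s b₀) s)) k,
          hpF, hpz, ?_, ?_⟩
        · rw [hxe]; exact hk
        · rw [hxe]; exact hk
      | succ k' =>
        refine ⟨Stmt15Aux.pw mul x k', (powF x hx hxz k').1, (powF x hx hxz k').2, ?_, ?_⟩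
        · rw [← Stmt15Aux.pw_succ_left mul hassoc x k']
          exact hfe
        · exact hfe
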